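/- Let G be a finite group, let 𝒟 be a collection of G, let S be a basic collection of G, and let H ∈ S. Then S_𝒟(H) is a closed family of subgroups of G; that is, F₁ ∩ F₂ ∈ S_𝒟(H) for all F₁, F₂ ∈ S_𝒟(H), and gFg⁻¹ ∈ S_𝒟(H) for all F ∈ S_𝒟(H) and g ∈ G. -/
import Mathlib

lemma conj_map_eq_of_normal {G : Type*} [Group G] (N : Subgroup G) (hN : N.Normal)
    (g : G) : N.map (MulAut.conj g).toMonoidHom = N := by
  ext x
  simp only [Subgroup.mem_map, MulEquiv.coe_toMonoidHom, MulAut.conj_apply]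
  constructor
  · rintro ⟨n, hn, rfl⟩
    exact hN.conj_mem n hn g
  · intro hx
    exact ⟨g⁻¹ * x * g, by simpa using hN.conj_mem x hx g⁻¹, by group⟩

lemma conj_map_le_iff {G : Type*} [Group G] (A B : Subgroup G) (g : G) :
    A ≤ B.map (MulAut.conj g).toMonoidHom ↔
      A.map (MulAut.conj g⁻¹).toMonoidHom ≤ B := by
  constructor
  · intro h
    have := Subgroup.map_mono (f := (MulAut.conj g⁻¹).toMonoidHom) h
    rwa [Subgroup.map_map, show ((MulAut.conj g⁻¹).toMonoidHom.comp
      (MulAut.conj g).toMonoidHom) = MonoidHom.id G by ext x; simp [mul_assoc], Subgroup.map_id] at this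
  · intro h
    have := Subgroup.map_mono (f := (MulAut.conj g).toMonoidHom) h
    rwa [Subgroup.map_map, show ((MulAut.conj g).toMonoidHom.comp
      (MulAut.conj g⁻¹).toMonoidHom) = MonoidHom.id G by ext x; simp [mul_assoc], Subgroup.map_id] at this

/-- With `𝒟` a collection and `S` a basic collection of a finite group `G`,
for every `H ∈ S` the family `S_𝒟(H)` is a closed family of subgroups of `G`:
it is closed under intersection and under conjugation. -/
theorem stmt_6 {G : Type*} [Group G] [Finite G]
    (𝒟 S : Set (Subgroup G))
    (h_top : ⊤ ∈ 𝒟)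
    (h_inf : ∀ H ∈ 𝒟, ∀ K ∈ 𝒟, H ⊓ K ∈ 𝒟)
    (h_conj : ∀ H ∈ 𝒟, ∀ g : G, H.map (MulAut.conj g).toMonoidHom ∈ 𝒟)
    (hS_bot : ⊥ ∈ S)
    (hS_norm : ∀ H ∈ S, H.Normal)
    (hS_sup : ∀ H ∈ S, ∀ K ∈ S, H ⊔ K ∈ S)
    (H : Subgroup G) (hH : H ∈ S) :
    let SD : Set (Subgroup G) :=
      {F ∈ 𝒟 | H ≤ F ∧ ∀ H' ∈ S, H ≤ H' → H' ≤ F → H' = H}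
    (∀ F₁ ∈ SD, ∀ F₂ ∈ SD, F₁ ⊓ F₂ ∈ SD) ∧
      (∀ F ∈ SD, ∀ g : G, F.map (MulAut.conj g).toMonoidHom ∈ SD) := by
  intro SD
  constructor
  · rintro F₁ ⟨hF₁D, hHF₁, hmin₁⟩ F₂ ⟨hF₂D, hHF₂, hmin₂⟩
    exact ⟨h_inf F₁ hF₁D F₂ hF₂D, le_inf hHF₁ hHF₂,
      fun H' hH' hle hle' => hmin₁ H' hH' hle (hle'.trans inf_le_left)⟩
  · rintro F ⟨hFD, hHF, hmin⟩ g
    refine ⟨h_conj F hFD g, ?_, ?_⟩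
    · rw [← conj_map_eq_of_normal H (hS_norm H hH) g]
      exact Subgroup.map_mono hHF
    · intro H' hH' hle hle'
      rw [conj_map_le_iff, conj_map_eq_of_normal H' (hS_norm H' hH') g⁻¹] at hle'
      exact hmin H' hH' hle hle'
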